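/- Let U ⊆ ℂ be open, z₀ ∈ U, and let h : ℂ → ℂ be holomorphic on U with h(z₀) = 0, h′(z₀) ≠ 0, and h(z) ≠ 0 for all z ∈ U \ {z₀}; set f(z) = (h(z))⁻¹, so that f has a simple pole at z₀. Define W : U → ℂ by W(z) = (1 + |h(z)|⁴)⁻¹ · conj(h′(z)) · h(z). Then: (i) V_f(z) = W(z) for every z ∈ U \ {z₀}, so W is the continuous extension of the desingularized Newton field of f across the pole, with W(z₀) = 0; and (ii) W is real Fréchet differentiable at z₀ with derivative the real-linear map dz ↦ |h′(z₀)|² · dz, i.e. HasFDerivAt W (|h′(z₀)|² • id) z₀. In particular a simple pole is a hyperbolic repellor of the desingularized Newton flow. -/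

import Mathlib

open Complex

/-- The desingularized Newton field of `f`. -/
noncomputable def desingNewton (f : ℂ → ℂ) (z : ℂ) : ℂ :=
  -(((1 + ‖f z‖ ^ 4 : ℝ) : ℂ))⁻¹ * (starRingEnd ℂ) (deriv f z) * f z

/-- Auxiliary algebraic identity for the desingularized Newton field at a nonzero point. -/
lemma desingNewton_aux (z : ℂ) (hz0 : z ≠ 0) (h' : ℂ) :
    -(((1 + ‖z⁻¹‖ ^ 4 : ℝ) : ℂ))⁻¹ * (starRingEnd ℂ) (-h' / z ^ 2) * z⁻¹
    = (((1 + ‖z‖ ^ 4 : ℝ) : ℂ))⁻¹ * (starRingEnd ℂ) h' * z := by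
  simp only [map_inv₀, map_div₀, map_neg, map_pow, norm_inv]
  set a := ‖z‖ with ha
  have hc0 : (starRingEnd ℂ) z ≠ 0 := by simpa using hz0
  have hapos : 0 < a := norm_pos_iff.mpr hz0
  have k4 : ((a:ℂ))^4 = z ^ 2 * (starRingEnd ℂ) z ^ 2 := by
    have k2 : ((a:ℂ))^2 = z * (starRingEnd ℂ) z := by
      rw [Complex.mul_conj, ha, Complex.normSq_eq_norm_sq]; push_cast; ring
    calc ((a:ℂ))^4 = (((a:ℂ))^2)^2 := by ring
      _ = z ^ 2 * (starRingEnd ℂ) z ^ 2 := by rw [k2]; ring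
  have h4 : (1:ℂ) + z ^ 2 * (starRingEnd ℂ) z ^ 2 ≠ 0 := by
    rw [← k4]
    have : ((1:ℂ) + (a:ℂ)^4) = ((1 + a^4 : ℝ) : ℂ) := by push_cast; ring
    rw [this, Complex.ofReal_ne_zero]
    positivity
  have e1 : (((1 + a⁻¹ ^ 4 : ℝ)) : ℂ) = 1 + ((a:ℂ)^4)⁻¹ := by push_cast; rw [inv_pow]
  have e2 : (((1 + a ^ 4 : ℝ)) : ℂ) = 1 + ((a:ℂ))^4 := by push_cast; ring
  rw [e1, e2, k4]
  have h5 : z * (starRingEnd ℂ) z ^ 2 + z ^ 3 * (starRingEnd ℂ) z ^ 4 ≠ 0 := by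
    have : z * (starRingEnd ℂ) z ^ 2 + z ^ 3 * (starRingEnd ℂ) z ^ 4
        = z * (starRingEnd ℂ) z ^ 2 * (1 + z ^ 2 * (starRingEnd ℂ) z ^ 2) := by ring
    rw [this]
    exact mul_ne_zero (mul_ne_zero hz0 (pow_ne_zero 2 hc0)) h4
  field_simp [hz0, hc0, h4, h5]
  rw [div_eq_iff (by rwa [add_comm] at h4)]
  ring

/-- Near a simple pole `z₀` of `f = 1/h`, the desingularized Newton field
extends continuously by `W(z) = (1+|h z|⁴)⁻¹ · conj(h'(z)) · h(z)`, with `W z₀ = 0`, and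
`W` is real Fréchet differentiable at `z₀` with derivative `dz ↦ |h'(z₀)|² · dz`;
hence a simple pole is a hyperbolic repellor. -/
theorem desingNewton_simple_pole_repellor
    (U : Set ℂ) (hU : IsOpen U) (z₀ : ℂ) (hz₀ : z₀ ∈ U)
    (h : ℂ → ℂ) (hh : DifferentiableOn ℂ h U)
    (h0 : h z₀ = 0) (h1 : deriv h z₀ ≠ 0)
    (hne : ∀ z ∈ U \ {z₀}, h z ≠ 0)
    (W : ℂ → ℂ)
    (hW : ∀ z, W z =
      (((1 + ‖h z‖ ^ 4 : ℝ) : ℂ))⁻¹ * (starRingEnd ℂ) (deriv h z) * h z) :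
    (∀ z ∈ U \ {z₀}, desingNewton (fun w => (h w)⁻¹) z = W z) ∧
    W z₀ = 0 ∧
    HasFDerivAt W ((‖deriv h z₀‖ ^ 2 : ℝ) • ContinuousLinearMap.id ℝ ℂ) z₀ := by
  have hAn : AnalyticOnNhd ℂ h U := hh.analyticOnNhd hU
  have hd : DifferentiableAt ℂ (deriv h) z₀ := ((hAn.deriv z₀ hz₀)).differentiableAt
  have hhz₀ : DifferentiableAt ℂ h z₀ := hh.differentiableAt (hU.mem_nhds hz₀)
  have hWz₀ : W z₀ = 0 := by rw [hW, h0, mul_zero]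
  refine ⟨?_, hWz₀, ?_⟩
  · intro z hz
    have hz0 : h z ≠ 0 := hne z hz
    have hdz : DifferentiableAt ℂ h z := hh.differentiableAt (hU.mem_nhds hz.1)
    have hderiv : deriv (fun w => (h w)⁻¹) z = -deriv h z / h z ^ 2 := deriv_inv'' hdz hz0
    rw [hW]
    simp only [desingNewton, hderiv]
    exact desingNewton_aux (h z) hz0 (deriv h z)
  · have hc : DifferentiableAt ℝ
        (fun z => (((1 + ‖h z‖ ^ 4 : ℝ)) : ℂ)⁻¹ * (starRingEnd ℂ) (deriv h z)) z₀ := by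
      have hns : DifferentiableAt ℝ (fun z => ‖h z‖ ^ 4) z₀ := by
        have heq : (fun z => ‖h z‖ ^ 4)
            = fun z => ((h z * (starRingEnd ℂ) (h z)).re) ^ 2 := by
          funext z
          rw [Complex.mul_conj, Complex.ofReal_re, Complex.normSq_eq_norm_sq]
          ring
        rw [heq]
        have hhr : DifferentiableAt ℝ h z₀ := hhz₀.restrictScalars ℝ
        exact ((Complex.reCLM.differentiableAt.comp z₀
          (hhr.mul ((Complex.conjCLE.differentiable.differentiableAt).comp z₀ hhr))).pow 2)
      have h1d : DifferentiableAt ℝ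
          (fun z => (((1 + ‖h z‖ ^ 4 : ℝ)) : ℂ)⁻¹) z₀ := by
        have : DifferentiableAt ℝ (fun z => (((1 + ‖h z‖ ^ 4 : ℝ)) : ℂ)) z₀ :=
          Complex.ofRealCLM.differentiableAt.comp z₀ ((differentiableAt_const 1).add hns)
        apply this.inv
        rw [Complex.ofReal_ne_zero]
        positivity
      exact h1d.mul ((Complex.conjCLE.differentiable.differentiableAt).comp z₀
        (hd.restrictScalars ℝ))
    have hDh : HasFDerivAt h
        (((ContinuousLinearMap.id ℂ ℂ).smulRight (deriv h z₀)).restrictScalars ℝ) z₀ :=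
      (hhz₀.hasDerivAt.hasFDerivAt).restrictScalars ℝ
    have hWeq : W = fun z =>
        ((((1 + ‖h z‖ ^ 4 : ℝ)) : ℂ)⁻¹ * (starRingEnd ℂ) (deriv h z)) * h z := by
      funext z; rw [hW z]
    rw [hWeq]
    have key := hc.hasFDerivAt.mul hDh
    rw [h0] at key
    refine key.congr_fderiv ?_
    ext dz
    simp [h0, ContinuousLinearMap.smul_apply, smul_eq_mul]
    rw [show ((‖deriv h z₀‖ : ℂ)) ^ 2 = ((‖deriv h z₀‖ ^ 2 : ℝ) : ℂ) by
      push_cast; ring, ← Complex.normSq_eq_norm_sq, ← Complex.mul_conj]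
    ring
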